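/- For d ∈ (0,1) and φ(x) = x^d, the function α_φ(x) = E[Poi(x)^d]/x^d is strictly increasing on [1,∞), hence min over integers x ≥ 1 equals α_φ(1) = e^{-1} ∑_{k=1}^∞ k^d/k!. -/

import Mathlib

open Set Real

section aux

variable {d : ℝ}

lemma rpow_le_two_pow (hd0 : 0 < d) (hd1 : d < 1) (k : ℕ) : (k : ℝ) ^ d ≤ 2 ^ k := by
  rcases Nat.eq_zero_or_pos k with rfl | hk
  · simp [Real.zero_rpow hd0.ne']
  · have h1 : (1 : ℝ) ≤ (k : ℝ) := by exact_mod_cast hk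
    calc (k : ℝ) ^ d ≤ (k : ℝ) ^ (1 : ℝ) :=
          Real.rpow_le_rpow_of_exponent_le h1 hd1.le
      _ = (k : ℝ) := Real.rpow_one _
      _ ≤ 2 ^ k := by exact_mod_cast (Nat.lt_two_pow_self (n := k)).le

lemma summable_gen {f : ℕ → ℝ} (C x : ℝ) (h0 : ∀ k, 0 ≤ f k)
    (h : ∀ k, f k ≤ C * (x ^ k / (Nat.factorial k : ℝ))) : Summable f :=
  Summable.of_nonneg_of_le h0 h ((Real.summable_pow_div_factorial x).mul_left C)

/-- F series summable -/
lemma summable_F (hd0 : 0 < d) (hd1 : d < 1) {x : ℝ} (hx : 0 ≤ x) :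
    Summable (fun k : ℕ => (k : ℝ) ^ d * x ^ k / (Nat.factorial k)) := by
  apply summable_gen 1 (2 * x)
  · intro k
    positivity
  · intro k
    have h1 : (k : ℝ) ^ d * x ^ k ≤ 2 ^ k * x ^ k :=
      mul_le_mul_of_nonneg_right (rpow_le_two_pow hd0 hd1 k) (by positivity)
    have h2 : (2 : ℝ) ^ k * x ^ k = (2 * x) ^ k := (mul_pow 2 x k).symm
    rw [one_mul]
    exact div_le_div_of_nonneg_right (h2 ▸ h1) (by positivity) |>.trans_eq rfl

lemma summable_G (hd0 : 0 < d) (hd1 : d < 1) {x : ℝ} (hx : 0 ≤ x) :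
    Summable (fun j : ℕ => ((j : ℝ) + 1) ^ d * x ^ j / (Nat.factorial j)) := by
  apply summable_gen 2 (2 * x)
  · intro k
    positivity
  · intro j
    have hb : ((j : ℝ) + 1) ^ d ≤ 2 ^ (j + 1) := by
      have := rpow_le_two_pow hd0 hd1 (j + 1)
      push_cast at this
      linarith
    have h1 : ((j : ℝ) + 1) ^ d * x ^ j ≤ 2 ^ (j + 1) * x ^ j :=
      mul_le_mul_of_nonneg_right hb (by positivity)
    have h2 : (2 : ℝ) ^ (j + 1) * x ^ j = 2 * (2 * x) ^ j := by
      rw [mul_pow, pow_succ]; ring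
    calc ((j : ℝ) + 1) ^ d * x ^ j / (Nat.factorial j)
        ≤ 2 ^ (j + 1) * x ^ j / (Nat.factorial j) :=
          div_le_div_of_nonneg_right h1 (by positivity)
      _ = 2 * ((2 * x) ^ j / (Nat.factorial j)) := by rw [h2]; ring

lemma summable_deriv (hd0 : 0 < d) (hd1 : d < 1) {x : ℝ} (hx : 0 ≤ x) :
    Summable (fun k : ℕ => (k : ℝ) ^ d * ((k : ℝ) * x ^ (k - 1)) / (Nat.factorial k)) := by
  apply summable_gen 1 (4 * (x + 1))
  · intro k
    positivity
  · intro k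
    have hk2 : (k : ℝ) ≤ 2 ^ k := by exact_mod_cast (Nat.lt_two_pow_self (n := k)).le
    have hx1 : x ^ (k - 1) ≤ (x + 1) ^ k := by
      calc x ^ (k - 1) ≤ (x + 1) ^ (k - 1) :=
            pow_le_pow_left₀ hx (by linarith) _
        _ ≤ (x + 1) ^ k := pow_le_pow_right₀ (by linarith) (Nat.sub_le k 1)
    have h1 : (k : ℝ) ^ d * ((k : ℝ) * x ^ (k - 1)) ≤ 2 ^ k * (2 ^ k * (x + 1) ^ k) := by
      have hterma : (0:ℝ) ≤ (k : ℝ) * x ^ (k-1) := by positivity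
      have : (k : ℝ) * x ^ (k - 1) ≤ 2 ^ k * (x + 1) ^ k :=
        mul_le_mul hk2 hx1 (by positivity) (by positivity)
      exact mul_le_mul (rpow_le_two_pow hd0 hd1 k) this hterma (by positivity)
    have h2 : (2:ℝ) ^ k * (2 ^ k * (x + 1) ^ k) = (4 * (x + 1)) ^ k := by
      rw [mul_pow, show (4:ℝ) = 2 * 2 by norm_num, mul_pow]; ring
    rw [one_mul]
    exact div_le_div_of_nonneg_right (h2 ▸ h1) (by positivity)

/-- derivative of F -/
lemma hasDerivAt_F (hd0 : 0 < d) (hd1 : d < 1) {x : ℝ} (hx : 0 < x) :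
    HasDerivAt (fun y : ℝ => ∑' k : ℕ, (k : ℝ) ^ d * y ^ k / (Nat.factorial k))
      (∑' k : ℕ, (k : ℝ) ^ d * ((k : ℝ) * x ^ (k - 1)) / (Nat.factorial k)) x := by
  have := hasDerivAt_tsum_of_isPreconnected
    (u := fun k : ℕ => (4 * (x + 1 + 1)) ^ k / (Nat.factorial k))
    (g := fun (k : ℕ) (y : ℝ) => (k : ℝ) ^ d * y ^ k / (Nat.factorial k))
    (g' := fun (k : ℕ) (y : ℝ) => (k : ℝ) ^ d * ((k : ℝ) * y ^ (k - 1)) / (Nat.factorial k))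
    (t := Ioo (0 : ℝ) (x + 1)) (y₀ := x) (y := x)
    (Real.summable_pow_div_factorial _) isOpen_Ioo (convex_Ioo _ _).isPreconnected
    ?_ ?_ ⟨hx, by linarith⟩ (summable_F hd0 hd1 hx.le) ⟨hx, by linarith⟩
  · exact this
  · intro k y hy
    exact ((hasDerivAt_pow k y).const_mul ((k:ℝ)^d)).div_const _
  · intro k y hy
    obtain ⟨hy0, hy1⟩ := hy
    have hk2 : (k : ℝ) ≤ 2 ^ k := by exact_mod_cast (Nat.lt_two_pow_self (n := k)).le
    have hy2 : y ^ (k - 1) ≤ (x + 1 + 1) ^ k := by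
      calc y ^ (k - 1) ≤ (x + 1 + 1) ^ (k - 1) :=
            pow_le_pow_left₀ hy0.le (by linarith) _
        _ ≤ (x + 1 + 1) ^ k := pow_le_pow_right₀ (by linarith) (Nat.sub_le k 1)
    have hnn : (0:ℝ) ≤ (k : ℝ) ^ d * ((k : ℝ) * y ^ (k - 1)) / (Nat.factorial k) := by
      positivity
    rw [Real.norm_of_nonneg hnn]
    have h1 : (k : ℝ) ^ d * ((k : ℝ) * y ^ (k - 1)) ≤ 2 ^ k * (2 ^ k * (x + 1 + 1) ^ k) := by
      have : (k : ℝ) * y ^ (k - 1) ≤ 2 ^ k * (x + 1 + 1) ^ k :=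
        mul_le_mul hk2 hy2 (by positivity) (by positivity)
      exact mul_le_mul (rpow_le_two_pow hd0 hd1 k) this (by positivity) (by positivity)
    have h2 : (2:ℝ) ^ k * (2 ^ k * (x + 1 + 1) ^ k) = (4 * (x + 1 + 1)) ^ k := by
      rw [mul_pow, show (4:ℝ) = 2 * 2 by norm_num, mul_pow]; ring
    exact div_le_div_of_nonneg_right (h2 ▸ h1) (by positivity)

/-- reindexing of the derivative series -/
lemma deriv_series_eq (hd0 : 0 < d) (hd1 : d < 1) {x : ℝ} (hx : 0 ≤ x) :
    (∑' k : ℕ, (k : ℝ) ^ d * ((k : ℝ) * x ^ (k - 1)) / (Nat.factorial k))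
      = ∑' j : ℕ, ((j : ℝ) + 1) ^ d * x ^ j / (Nat.factorial j) := by
  rw [Summable.tsum_eq_zero_add (summable_deriv hd0 hd1 hx)]
  simp only [Nat.cast_zero, Nat.cast_succ]
  rw [show ((0:ℝ)) ^ d * ((0:ℝ) * x ^ (0 - 1)) / (Nat.factorial 0) = 0 by simp, zero_add]
  apply tsum_congr
  intro j
  have hfac : (Nat.factorial (j + 1) : ℝ) = ((j : ℝ) + 1) * (Nat.factorial j) := by
    rw [Nat.factorial_succ]; push_cast; ring
  have hj1 : ((j : ℝ) + 1) ≠ 0 := by positivity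
  have hfj : (Nat.factorial j : ℝ) ≠ 0 := by positivity
  rw [Nat.succ_sub_one, hfac]
  push_cast
  field_simp

/-- MVT inequality: for a ≥ 1, a^d + d·(a+1)^(d-1) < (a+1)^d -/
lemma mvt_ineq (hd0 : 0 < d) (hd1 : d < 1) {a : ℝ} (ha : 1 ≤ a) :
    a ^ d + d * (a + 1) ^ (d - 1) < (a + 1) ^ d := by
  have ha0 : 0 < a := by linarith
  obtain ⟨c, hc, hslope⟩ := exists_hasDerivAt_eq_slope (fun t => t ^ d)
    (fun t => d * t ^ (d - 1)) (show a < a + 1 by linarith)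
    (fun t ht => by
      have ht0 : t ≠ 0 := by rintro rfl; simp at ht; linarith [ht.1]
      exact (Real.continuousAt_rpow_const t d (Or.inl ht0)).continuousWithinAt)
    (fun t ht => Real.hasDerivAt_rpow_const (Or.inl (by rintro rfl; simp at ht; linarith [ht.1])))
  have hc0 : 0 < c := by linarith [hc.1]
  have hkey : (a + 1) ^ (d - 1) < c ^ (d - 1) :=
    Real.rpow_lt_rpow_of_neg hc0 hc.2 (by linarith)
  have hslope' : d * c ^ (d - 1) = (a + 1) ^ d - a ^ d := by
    rw [hslope]; ring_nf
  nlinarith [hkey, hc0]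

end aux

/-- For `d ∈ (0,1)` and `φ(x) = x^d`, the ratio `α_φ(x) = E[Poi(x)^d]/x^d` is strictly
increasing on `[1,∞)`, so its minimum over positive integers is
`α_φ(1) = e^{-1} ∑_{k≥1} k^d/k!`. -/
theorem stmt12 (d : ℝ) (hd : d ∈ Set.Ioo (0 : ℝ) 1)
    (α : ℝ → ℝ)
    (hα : ∀ x : ℝ, α x =
      (∑' k : ℕ, Real.exp (-x) * x ^ k / (Nat.factorial k) * (k : ℝ) ^ d) / x ^ d) :
    StrictMonoOn α (Set.Ici 1) ∧
      IsLeast {y : ℝ | ∃ n : ℕ, 1 ≤ n ∧ y = α n}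
        (Real.exp (-1) * ∑' k : ℕ, (k : ℝ) ^ d / (Nat.factorial k)) := by
  obtain ⟨hd0, hd1⟩ := hd
  set F : ℝ → ℝ := fun y => ∑' k : ℕ, (k : ℝ) ^ d * y ^ k / (Nat.factorial k) with hF
  -- α equals β everywhere
  have hαβ : ∀ x : ℝ, α x = Real.exp (-x) * F x / x ^ d := by
    intro x
    rw [hα x, hF]
    congr 1
    rw [← tsum_mul_left]
    apply tsum_congr
    intro k
    ring
  -- HasDerivAt α at every x ≥ 1
  have hderiv : ∀ x : ℝ, 1 ≤ x →
      HasDerivAt α (Real.exp (-x) * x ^ (-d - 1) *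
        (x * (∑' j : ℕ, ((j : ℝ) + 1) ^ d * x ^ j / (Nat.factorial j)) - (x + d) * F x)) x := by
    intro x hx1
    have hx0 : (0:ℝ) < x := by linarith
    set G : ℝ := ∑' j : ℕ, ((j : ℝ) + 1) ^ d * x ^ j / (Nat.factorial j) with hG
    have hE : HasDerivAt (fun y : ℝ => Real.exp (-y)) (-Real.exp (-x)) x := by
      simpa [Function.comp_def] using (Real.hasDerivAt_exp (-x)).comp x ((hasDerivAt_id x).neg)
    have hFd : HasDerivAt F G x := by
      have := hasDerivAt_F hd0 hd1 hx0
      rwa [deriv_series_eq hd0 hd1 hx0.le] at this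
    have hP : HasDerivAt (fun y : ℝ => y ^ (-d)) (-d * x ^ (-d - 1)) x := by
      simpa using Real.hasDerivAt_rpow_const (p := -d) (Or.inl hx0.ne')
    have hβd : HasDerivAt (fun y : ℝ => Real.exp (-y) * F y * y ^ (-d))
        ((-Real.exp (-x) * F x + Real.exp (-x) * G) * x ^ (-d)
          + Real.exp (-x) * F x * (-d * x ^ (-d - 1))) x := (hE.mul hFd).mul hP
    have heq : α =ᶠ[nhds x] (fun y : ℝ => Real.exp (-y) * F y * y ^ (-d)) := by
      filter_upwards [isOpen_Ioi.mem_nhds (show (0:ℝ) < x from hx0)] with y hy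
      rw [hαβ y, Real.rpow_neg (le_of_lt hy), div_eq_mul_inv]
    have hαd := hβd.congr_of_eventuallyEq heq
    refine hαd.congr_deriv ?_
    have hpow : x ^ (-d - 1) * x = x ^ (-d) := by
      rw [← Real.rpow_add_one hx0.ne']; ring_nf
    rw [← hpow]
    ring
  -- positivity of the derivative for x ≥ 1
  have hpos : ∀ x : ℝ, 1 ≤ x →
      0 < Real.exp (-x) * x ^ (-d - 1) *
        (x * (∑' j : ℕ, ((j : ℝ) + 1) ^ d * x ^ j / (Nat.factorial j)) - (x + d) * F x) := by
    intro x hx1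
    have hx0 : (0:ℝ) < x := by linarith
    apply mul_pos (mul_pos (Real.exp_pos _) (Real.rpow_pos_of_pos hx0 _))
    rw [sub_pos]
    -- rewrite LHS as sum of B and RHS as sum of A
    have hSf := summable_F hd0 hd1 (d := d) hx0.le
    have hSg := summable_G hd0 hd1 (d := d) hx0.le
    have hxF : x * F x = ∑' k : ℕ, (k : ℝ) ^ d * x ^ (k + 1) / (Nat.factorial k) := by
      rw [hF, ← tsum_mul_left]
      apply tsum_congr; intro k; rw [pow_succ]; ring
    have hdF : d * F x = ∑' j : ℕ, d * (((j : ℝ) + 1) ^ (d - 1) * x ^ (j + 1) / (Nat.factorial j)) := by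
      simp only [hF]
      rw [Summable.tsum_eq_zero_add hSf]
      rw [show ((0:ℕ) : ℝ) ^ d * x ^ (0:ℕ) / (Nat.factorial 0) = 0 by
        simp [Real.zero_rpow hd0.ne'], zero_add, ← tsum_mul_left]
      apply tsum_congr
      intro j
      have hj1 : (0:ℝ) < (j : ℝ) + 1 := by positivity
      have hfac : (Nat.factorial (j + 1) : ℝ) = ((j : ℝ) + 1) * (Nat.factorial j) := by
        rw [Nat.factorial_succ]; push_cast; ring
      have hr : ((j : ℝ) + 1) ^ d = ((j : ℝ) + 1) ^ (d - 1) * ((j:ℝ) + 1) := by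
        rw [← Real.rpow_add_one hj1.ne']; ring_nf
      push_cast
      rw [hfac, hr]
      field_simp
    have hxG : x * (∑' j : ℕ, ((j : ℝ) + 1) ^ d * x ^ j / (Nat.factorial j))
        = ∑' j : ℕ, ((j : ℝ) + 1) ^ d * x ^ (j + 1) / (Nat.factorial j) := by
      rw [← tsum_mul_left]
      apply tsum_congr; intro j; rw [pow_succ]; ring
    -- summabilities of the pieces
    have hS1 : Summable (fun k : ℕ => (k : ℝ) ^ d * x ^ (k + 1) / (Nat.factorial k)) := by
      have := hSf.mul_left x
      apply this.congr
      intro k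
      rw [pow_succ]; ring
    have hS2 : Summable (fun j : ℕ => d * (((j : ℝ) + 1) ^ (d - 1) * x ^ (j + 1) / (Nat.factorial j))) := by
      apply summable_gen (d * x) (x) (fun j => by positivity)
      intro j
      have h1 : ((j : ℝ) + 1) ^ (d - 1) ≤ 1 :=
        Real.rpow_le_one_of_one_le_of_nonpos (by push_cast; linarith [Nat.cast_nonneg (α := ℝ) j]) (by linarith)
      have h2 : ((j : ℝ) + 1) ^ (d - 1) * x ^ (j + 1) / (Nat.factorial j)
          ≤ 1 * x ^ (j + 1) / (Nat.factorial j) := by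
        apply div_le_div_of_nonneg_right _ (by positivity)
        exact mul_le_mul_of_nonneg_right h1 (by positivity)
      calc d * (((j : ℝ) + 1) ^ (d - 1) * x ^ (j + 1) / (Nat.factorial j))
          ≤ d * (1 * x ^ (j + 1) / (Nat.factorial j)) :=
            mul_le_mul_of_nonneg_left h2 hd0.le
        _ = d * x * (x ^ j / (Nat.factorial j)) := by rw [pow_succ]; ring
    have hSA : Summable (fun j : ℕ => ((j : ℝ) + 1) ^ d * x ^ (j + 1) / (Nat.factorial j)) := by
      have := hSg.mul_left x
      apply this.congr
      intro j
      rw [pow_succ]; ring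
    rw [add_mul, hxF, hdF, hxG, ← Summable.tsum_add hS1 hS2]
    apply Summable.tsum_lt_tsum_of_nonneg (i := 0)
    · intro b; positivity
    · intro b
      rcases Nat.eq_zero_or_pos b with rfl | hb
      · norm_num [Real.zero_rpow hd0.ne', Real.one_rpow]
        nlinarith
      · have hb1 : (1:ℝ) ≤ (b : ℝ) := by exact_mod_cast hb
        have hmvt := mvt_ineq hd0 hd1 (a := (b:ℝ)) hb1
        have hq : (0:ℝ) < x ^ (b + 1) / (Nat.factorial b) := by positivity
        have := mul_le_mul_of_nonneg_right
          (le_of_lt hmvt) hq.le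
        calc (b : ℝ) ^ d * x ^ (b + 1) / (Nat.factorial b)
              + d * (((b : ℝ) + 1) ^ (d - 1) * x ^ (b + 1) / (Nat.factorial b))
            = ((b : ℝ) ^ d + d * ((b : ℝ) + 1) ^ (d - 1)) * (x ^ (b + 1) / (Nat.factorial b)) := by
              ring
          _ ≤ ((b : ℝ) + 1) ^ d * (x ^ (b + 1) / (Nat.factorial b)) := this
          _ = ((b : ℝ) + 1) ^ d * x ^ (b + 1) / (Nat.factorial b) := by ring
    · -- strict at 0
      norm_num [Real.zero_rpow hd0.ne', Real.one_rpow]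
      nlinarith
    · exact hSA
  have hmono : StrictMonoOn α (Set.Ici 1) := by
    apply strictMonoOn_of_deriv_pos (convex_Ici 1)
    · intro x hx
      exact ((hderiv x hx).continuousAt).continuousWithinAt
    · intro x hx
      rw [interior_Ici] at hx
      rw [(hderiv x (le_of_lt hx)).deriv]
      exact hpos x (le_of_lt hx)
  refine ⟨hmono, ?_, ?_⟩
  · -- α 1 is in the set
    refine ⟨1, le_refl 1, ?_⟩
    rw [Nat.cast_one, hα 1]
    rw [Real.one_rpow, div_one]
    rw [← tsum_mul_left]
    apply tsum_congr
    intro k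
    rw [one_pow]
    ring
  · -- lower bound
    rintro y ⟨n, hn, rfl⟩
    have hval : Real.exp (-1) * ∑' k : ℕ, (k : ℝ) ^ d / (Nat.factorial k) = α 1 := by
      rw [hα 1, Real.one_rpow, div_one, ← tsum_mul_left]
      apply tsum_congr
      intro k
      rw [one_pow]
      ring
    rw [hval]
    rcases eq_or_lt_of_le hn with h1 | h1
    · rw [← h1]; norm_num
    · have hn1 : (1:ℝ) < (n : ℝ) := by exact_mod_cast h1
      exact le_of_lt (hmono (by norm_num) (by simp only [Set.mem_Ici]; exact_mod_cast hn) hn1)
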